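/- For all words u, v, t over a finite alphabet, r(u·v, t) ≤ ρ(u) + r(v, t) and ℓ(t, u·v) ≤ ρ(v) + ℓ(t, u). -/

import Mathlib

variable {A : Type*}

/-- Simon's congruence of order `k`: `u` and `v` have the same subwords of length ≤ k. -/
def SimonCong (k : ℕ) (u v : List A) : Prop :=
  ∀ s : List A, s.length ≤ k → (s.Sublist u ↔ s.Sublist v)

/-- Subword distance `δ(u,v) = sup {k | u ∼ₖ v} ∈ ℕ∞`. -/
noncomputable def sdelta (u v : List A) : ℕ∞ :=
  sSup {d : ℕ∞ | ∃ k : ℕ, d = k ∧ SimonCong k u v}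

/-- Right side distance `r(u,t) = δ(u, u·t)`. -/
noncomputable def rdist (u t : List A) : ℕ∞ := sdelta u (u ++ t)

/-- Left side distance `ℓ(t,u) = δ(t·u, u)`. -/
noncomputable def ldist (t u : List A) : ℕ∞ := sdelta (t ++ u) u

/-- Piecewise complexity `h(u)`: least `n` such that any `v` with `u ∼ₙ v` equals `u`. -/
noncomputable def pcHeight (u : List A) : ℕ :=
  sInf {n : ℕ | ∀ v : List A, SimonCong n u v → v = u}

/-- `u` is `m`-reduced: no strict subword of `u` is `∼ₘ`-equivalent to `u`. -/
def Reduced (m : ℕ) (u : List A) : Prop :=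
  ∀ u' : List A, u'.Sublist u → u' ≠ u → ¬ SimonCong m u u'

/-- Piecewise minimality index `ρ(u)`: least `m` such that `u` is `m`-reduced. -/
noncomputable def pcRho (u : List A) : ℕ := sInf {m : ℕ | Reduced m u}

/-- An `A`-arch: contains every letter of `A` but no strict prefix does. -/
def IsArch (A : Type*) [Fintype A] (s : List A) : Prop :=
  (∀ a : A, a ∈ s) ∧ ∀ t : List A, t <+: s → t ≠ s → ∃ a : A, a ∉ t

/-- The infinite periodic word `u^ω`. -/
def omegaWord (u : List A) (hu : u ≠ []) (i : ℕ) : A :=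
  u.get ⟨i % u.length, Nat.mod_lt i (List.length_pos_iff.mpr hu)⟩

/-- The arch-jumping function `α` on `u^ω`: `α(i)` is the least `j > i` such that
every letter of `A` occurs among positions `i, …, j-1` of `u^ω`. -/
noncomputable def archJump (u : List A) (hu : u ≠ []) (i : ℕ) : ℕ :=
  sInf {j : ℕ | i < j ∧ ∀ a : A, ∃ m : ℕ, i ≤ m ∧ m < j ∧ omegaWord u hu m = a}

/-- `p` is an arch-period of `u` starting at `i`. -/
def IsArchPeriodAt (u : List A) (hu : u ≠ []) (i p : ℕ) : Prop :=
  0 < p ∧ ∃ k : ℕ, (archJump u hu)^[k + p] i ≡ (archJump u hu)^[k] i [MOD u.length]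

/-- The arch-period of `u`: the least arch-period starting at 0. -/
noncomputable def archPeriod (u : List A) (hu : u ≠ []) : ℕ :=
  sInf {p : ℕ | IsArchPeriodAt u hu 0 p}

/-- `K_u`: the least `k` with `α^{k+p}(0) ≡ α^k(0) (mod L)`. -/
noncomputable def archTransientIndex (u : List A) (hu : u ≠ []) : ℕ :=
  sInf {k : ℕ |
    (archJump u hu)^[k + archPeriod u hu] 0 ≡ (archJump u hu)^[k] 0 [MOD u.length]}

/-- The transient `T_u = α^{K_u}(0)`. -/
noncomputable def archTransient (u : List A) (hu : u ≠ []) : ℕ :=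
  (archJump u hu)^[archTransientIndex u hu] 0

/-- The span `Δ_u = α^{K_u+p_u}(0) − α^{K_u}(0)`. -/
noncomputable def archSpan (u : List A) (hu : u ≠ []) : ℕ :=
  (archJump u hu)^[archTransientIndex u hu + archPeriod u hu] 0 - archTransient u hu

/-- `u^n`: the `n`-fold concatenation of `u`. -/
def listPow (u : List A) (n : ℕ) : List A := (List.replicate n u).flatten

open List in
private lemma simonCong_mono {A : Type*} {k m : ℕ} {u v : List A}
    (h : SimonCong k u v) (hm : m ≤ k) : SimonCong m u v :=
  fun s hs => h s (hs.trans hm)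

open List in
private lemma reduced_mono {A : Type*} {m m' : ℕ} {u : List A}
    (h : Reduced m u) (hm : m ≤ m') : Reduced m' u :=
  fun u' hsub hne hc => h u' hsub hne (simonCong_mono hc hm)

open List in
private lemma reduced_rho {A : Type*} (u : List A) : Reduced (pcRho u) u := by
  have hne : {m : ℕ | Reduced m u}.Nonempty := by
    refine ⟨u.length, fun u' hsub hne hc => ?_⟩
    exact hne (hsub.antisymm ((hc u le_rfl).mp (List.Sublist.refl u)))
  exact Nat.sInf_mem hne

open List in
private lemma exists_last_occ {A : Type*} {a : A} {l : List A} (h : a ∈ l) :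
    ∃ w z : List A, l = w ++ a :: z ∧ a ∉ z := by
  induction l with
  | nil => simp at h
  | cons b l ih =>
    by_cases hb : a ∈ l
    · obtain ⟨w, z, rfl, hz⟩ := ih hb
      exact ⟨b :: w, z, rfl, hz⟩
    · rcases List.mem_cons.mp h with rfl | h'
      · exact ⟨[], l, rfl, hb⟩
      · exact absurd h' hb

open List in
private lemma sublist_reverse_iff' {A : Type*} {s u : List A} :
    s.Sublist u.reverse ↔ s.reverse.Sublist u := by
  constructor
  · intro h
    have := List.reverse_sublist.mpr h
    simpa using this
  · intro h
    have := List.reverse_sublist.mpr h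
    simpa using this

open List in
private lemma key_lemma {A : Type*} (u : List A) (a : A) :
    ∃ x : List A, x.Sublist u ∧ ¬ (x ++ [a]).Sublist u ∧ x.length ≤ pcRho u := by
  set S : Set ℕ := {n | ∃ x : List A, x.Sublist u ∧ ¬ (x ++ [a]).Sublist u ∧ x.length = n}
    with hS
  have hne : S.Nonempty := by
    refine ⟨u.length, u, List.Sublist.refl u, fun hc => ?_, rfl⟩
    have := hc.length_le
    simp at this
  obtain ⟨x, hxu, hxa, hxlen⟩ := Nat.sInf_mem hne
  refine ⟨x, hxu, hxa, ?_⟩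
  by_contra hlt
  push_neg at hlt
  have hmin : ∀ y : List A, y.Sublist u → y.length < x.length → (y ++ [a]).Sublist u := by
    intro y hyu hylen
    by_contra hya
    have hmem : y.length ∈ S := ⟨y, hyu, hya, rfl⟩
    have := Nat.sInf_le hmem
    omega
  have ha : a ∈ u := by
    by_contra ha
    have h0 : (0 : ℕ) ∈ S :=
      ⟨[], List.nil_sublist u, fun hc => ha (hc.subset (by simp)), rfl⟩
    have := Nat.sInf_le h0
    omega
  obtain ⟨w, z, rfl, hz⟩ := exists_last_occ ha
  have hu'sub : (w ++ z).Sublist (w ++ a :: z) :=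
    (List.sublist_cons_self a z).append_left w
  have hu'ne : (w ++ z) ≠ (w ++ a :: z) := by
    intro h
    apply_fun List.length at h
    simp at h
  have hred : Reduced (x.length - 1) (w ++ a :: z) :=
    reduced_mono (reduced_rho _) (by omega)
  apply hred (w ++ z) hu'sub hu'ne
  intro s hs
  constructor
  · intro hsu
    obtain ⟨p, q, rfl, hp, hq⟩ := List.sublist_append_iff.mp hsu
    rcases List.sublist_cons_iff.mp hq with hq' | ⟨y, rfl, hy⟩
    · exact hp.append hq'
    · have hplen : p.length + 1 < x.length := by
        have := hs
        simp [List.length_append] at this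
        omega
      have hpa : (p ++ [a]).Sublist (w ++ a :: z) :=
        hmin p (hp.trans (List.sublist_append_left w (a :: z))) (by omega)
      have hpaa : ((p ++ [a]) ++ [a]).Sublist (w ++ a :: z) :=
        hmin (p ++ [a]) hpa (by simp; omega)
      have hsplit : w ++ a :: z = (w ++ [a]) ++ z := by simp
      rw [hsplit] at hpaa
      obtain ⟨r, q2, heq, hr, hq2⟩ := List.sublist_append_iff.mp hpaa
      have hpaw : (p ++ [a]).Sublist w := by
        rcases List.append_eq_append_iff.mp heq with ⟨e, hre, hae⟩ | ⟨e, hpe, hq2e⟩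
        · -- r = (p++[a]) ++ e, [a] = e ++ q2
          cases e with
          | nil =>
            simp only [List.nil_append] at hae
            exact absurd (hq2.subset (by simp [← hae])) hz
          | cons c e' =>
            have hc : c = a ∧ e' ++ q2 = [] := by
              have : a :: ([] : List A) = c :: (e' ++ q2) := by simpa using hae
              exact ⟨(List.cons.injEq _ _ _ _ ▸ this).1.symm, (List.cons.injEq _ _ _ _ ▸ this).2.symm⟩
            obtain ⟨hca, he⟩ := hc
            have he' : e' = [] ∧ q2 = [] := List.append_eq_nil_iff.mp he
            rw [hre, he'.1, hca] at hr
            simpa using (List.append_sublist_append_right [a]).mp (by simpa using hr)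
        · -- p ++ [a] = r ++ e, q2 = e ++ [a]
          exact absurd (hq2.subset (by simp [hq2e])) hz
      have : ((p ++ [a]) ++ y).Sublist (w ++ z) := hpaw.append hy
      simpa [List.append_assoc] using this
  · intro hsu'
    exact hsu'.trans hu'sub

open List in
private lemma core_transfer {A : Type*} {u v t : List A} {m : ℕ}
    (h : SimonCong (pcRho u + m) (u ++ v) (u ++ v ++ t)) :
    SimonCong m v (v ++ t) := by
  intro s hs
  constructor
  · exact fun h' => h'.trans (List.sublist_append_left v t)
  · intro hsvt
    cases s with
    | nil => exact List.nil_sublist v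
    | cons a s' =>
      obtain ⟨x, hxu, hxa, hxr⟩ := key_lemma u a
      have h1 : (x ++ a :: s').Sublist (u ++ v ++ t) := by
        have := hxu.append hsvt
        simpa [List.append_assoc] using this
      have hlen : (x ++ a :: s').length ≤ pcRho u + m := by
        simp only [List.length_append, List.length_cons]
        simp at hs
        omega
      have h2 : (x ++ a :: s').Sublist (u ++ v) := (h _ hlen).mpr h1
      obtain ⟨p, q, heq, hp, hq⟩ := List.sublist_append_iff.mp h2
      rcases List.append_eq_append_iff.mp heq with ⟨e, hpe, hse⟩ | ⟨e, hxe, hqe⟩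
      · cases e with
        | nil =>
          simp only [List.nil_append] at hse
          rwa [← hse] at hq
        | cons b e' =>
          have hb : a = b ∧ s' = e' ++ q := by
            have : a :: s' = b :: (e' ++ q) := by simpa using hse
            exact ⟨(List.cons.injEq _ _ _ _ ▸ this).1, (List.cons.injEq _ _ _ _ ▸ this).2⟩
          obtain ⟨rfl, -⟩ := hb
          exfalso
          apply hxa
          have : (x ++ [a]).Sublist (x ++ a :: e') := by
        
            exact (List.append_sublist_append_left x).mpr
              (List.cons_sublist_cons.mpr (List.nil_sublist e'))
          exact (this.trans (hpe ▸ hp))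
      · have : (a :: s').Sublist q := hqe ▸ List.sublist_append_right e (a :: s')
        exact this.trans hq

open List in
private lemma rdist_le_aux {A : Type*} (u v t : List A) :
    rdist (u ++ v) t ≤ (pcRho u : ℕ∞) + rdist v t := by
  apply sSup_le
  rintro d ⟨k, rfl, hk⟩
  by_cases hkr : k ≤ pcRho u
  · calc (k : ℕ∞) ≤ (pcRho u : ℕ∞) := by exact_mod_cast hkr
      _ ≤ _ := le_self_add
  · push_neg at hkr
    have hk' : SimonCong (pcRho u + (k - pcRho u)) (u ++ v) (u ++ v ++ t) := by
      rw [show pcRho u + (k - pcRho u) = k by omega]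
      exact hk
    have hm : SimonCong (k - pcRho u) v (v ++ t) := core_transfer hk'
    have hmem : ((k - pcRho u : ℕ) : ℕ∞) ≤ rdist v t :=
      le_sSup ⟨k - pcRho u, rfl, hm⟩
    calc (k : ℕ∞) = ((pcRho u : ℕ) : ℕ∞) + ((k - pcRho u : ℕ) : ℕ∞) := by
          rw [← Nat.cast_add]
          congr 1
          omega
      _ ≤ _ := add_le_add le_rfl hmem

open List in
private lemma simonCong_reverse' {A : Type*} {k : ℕ} {u v : List A}
    (h : SimonCong k u v) : SimonCong k u.reverse v.reverse := by
  intro s hs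
  rw [sublist_reverse_iff', sublist_reverse_iff']
  exact h s.reverse (by simpa using hs)

open List in
private lemma sdelta_reverse' {A : Type*} (u v : List A) :
    sdelta u.reverse v.reverse = sdelta u v := by
  unfold sdelta
  congr 1
  ext d
  simp only [Set.mem_setOf_eq]
  constructor
  · rintro ⟨k, rfl, hk⟩
    exact ⟨k, rfl, by simpa using simonCong_reverse' hk⟩
  · rintro ⟨k, rfl, hk⟩
    exact ⟨k, rfl, simonCong_reverse' hk⟩

open List in
private lemma sdelta_comm' {A : Type*} (u v : List A) : sdelta u v = sdelta v u := by
  unfold sdelta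
  congr 1
  ext d
  simp only [Set.mem_setOf_eq]
  constructor
  · rintro ⟨k, rfl, hk⟩
    exact ⟨k, rfl, fun s hs => (hk s hs).symm⟩
  · rintro ⟨k, rfl, hk⟩
    exact ⟨k, rfl, fun s hs => (hk s hs).symm⟩

open List in
private lemma reduced_reverse' {A : Type*} {m : ℕ} {u : List A}
    (h : Reduced m u) : Reduced m u.reverse := by
  intro u' hsub hne hc
  apply h u'.reverse (sublist_reverse_iff'.mp hsub)
    (fun he => hne (by rw [← he, List.reverse_reverse]))
  simpa using simonCong_reverse' hc

open List in
private lemma pcRho_reverse' {A : Type*} (u : List A) : pcRho u.reverse = pcRho u := by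
  unfold pcRho
  congr 1
  ext m
  simp only [Set.mem_setOf_eq]
  constructor
  · intro h
    have := reduced_reverse' h
    simpa using this
  · exact reduced_reverse'

open List in
private lemma ldist_eq_rdist {A : Type*} (t u : List A) :
    ldist t u = rdist u.reverse t.reverse := by
  unfold ldist rdist
  rw [← sdelta_reverse' (t ++ u) u, List.reverse_append, sdelta_comm']


/-- `r(u·v, t) ≤ ρ(u) + r(v, t)` and `ℓ(t, u·v) ≤ ρ(v) + ℓ(t, u)`. -/
theorem stmt13 {A : Type*} [Fintype A] (u v t : List A) :
    rdist (u ++ v) t ≤ (pcRho u : ℕ∞) + rdist v t ∧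
    ldist t (u ++ v) ≤ (pcRho v : ℕ∞) + ldist t u := by
  constructor
  · exact rdist_le_aux u v t
  · calc ldist t (u ++ v) = rdist (u ++ v).reverse t.reverse := ldist_eq_rdist _ _
      _ = rdist (v.reverse ++ u.reverse) t.reverse := by rw [List.reverse_append]
      _ ≤ (pcRho v.reverse : ℕ∞) + rdist u.reverse t.reverse := rdist_le_aux _ _ _
      _ = (pcRho v : ℕ∞) + ldist t u := by rw [pcRho_reverse', ldist_eq_rdist]
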